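/- Cut cone representation: for any finite subset X ⊆ L¹(Ω,μ) there exist nonnegative reals (β_S)_{S ⊆ X} such that for all f,g ∈ X, ‖f-g‖₁ = Σ_{S ⊆ X} β_S · |𝟙_S(f) - 𝟙_S(g)|. -/

import Mathlib

open MeasureTheory
open Classical

noncomputable def cutW {α : Type*} [DecidableEq α] (X : Finset α) (v : α → ℝ) (S : Finset α) : ℝ :=
  if h1 : S.Nonempty then
    if h2 : (X \ S).Nonempty then max (S.inf' h1 v - (X \ S).sup' h2 v) 0 else 0
  else 0

lemma cutW_pos_eq {α : Type*} [DecidableEq α] {X : Finset α} (v : α → ℝ) {S : Finset α}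
    (h1 : S.Nonempty) (h2 : (X \ S).Nonempty) :
    cutW X v S = max (S.inf' h1 v - (X \ S).sup' h2 v) 0 := by
  unfold cutW; split_ifs <;> first | rfl | exact absurd ‹_› ‹_›

lemma cutW_zero₁ {α : Type*} [DecidableEq α] {X : Finset α} (v : α → ℝ) {S : Finset α}
    (h1 : ¬ S.Nonempty) : cutW X v S = 0 := by
  unfold cutW; split_ifs <;> first | rfl | exact absurd ‹_› ‹_›

lemma cutW_zero₂ {α : Type*} [DecidableEq α] {X : Finset α} (v : α → ℝ) {S : Finset α}
    (h2 : ¬ (X \ S).Nonempty) : cutW X v S = 0 := by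
  unfold cutW; split_ifs <;> first | rfl | exact absurd ‹_› ‹_›

lemma cutW_nonneg {α : Type*} [DecidableEq α] (X : Finset α) (v : α → ℝ) (S : Finset α) :
    0 ≤ cutW X v S := by
  unfold cutW; split_ifs <;> simp

lemma cut_sum_half {α : Type*} [DecidableEq α] (X : Finset α) (v : α → ℝ)
    {f g : α} (hf : f ∈ X) (hg : g ∈ X) :
    ∑ S ∈ X.powerset.filter (fun S => f ∈ S ∧ g ∉ S), cutW X v S
      = max (v f - v g) 0 := by
  set P := X.powerset.filter (fun S => f ∈ S ∧ g ∉ S) with hP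
  have hmem : ∀ S ∈ P, S ⊆ X ∧ f ∈ S ∧ g ∈ X \ S := by
    intro S hS
    simp only [hP, Finset.mem_filter, Finset.mem_powerset] at hS
    exact ⟨hS.1, hS.2.1, Finset.mem_sdiff.2 ⟨hg, hS.2.2⟩⟩
  set a : Finset α → ℝ := fun S => if h : (X \ S).Nonempty then (X \ S).sup' h v else 0 with ha
  set b : Finset α → ℝ := fun S => if h : S.Nonempty then S.inf' h v else 0 with hb
  have haval : ∀ (S : Finset α) (h2 : (X \ S).Nonempty), a S = (X \ S).sup' h2 v := by
    intro S h2
    simp only [ha]; split_ifs <;> first | rfl | exact absurd ‹_› ‹_›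
  have hbval : ∀ (S : Finset α) (h1 : S.Nonempty), b S = S.inf' h1 v := by
    intro S h1
    simp only [hb]; split_ifs <;> first | rfl | exact absurd ‹_› ‹_›
  have hcut : ∀ S ∈ P, cutW X v S = (volume (Set.Ico (a S) (b S))).toReal := by
    intro S hS
    obtain ⟨hSX, hfS, hgS⟩ := hmem S hS
    have h1 : S.Nonempty := ⟨f, hfS⟩
    have h2 : (X \ S).Nonempty := ⟨g, hgS⟩
    rw [cutW_pos_eq v h1 h2, haval S h2, hbval S h1, Real.volume_Ico,
      ENNReal.toReal_ofReal']
  have hchar : ∀ S ∈ P, ∀ t ∈ Set.Ico (a S) (b S), S = X.filter (fun h => t < v h) := by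
    intro S hS t ht
    obtain ⟨hSX, hfS, hgS⟩ := hmem S hS
    have h1 : S.Nonempty := ⟨f, hfS⟩
    have h2 : (X \ S).Nonempty := ⟨g, hgS⟩
    have hta : (X \ S).sup' h2 v ≤ t := by rw [← haval S h2]; exact ht.1
    have htb : t < S.inf' h1 v := by rw [← hbval S h1]; exact ht.2
    ext h
    simp only [Finset.mem_filter]
    constructor
    · intro hh
      exact ⟨hSX hh, lt_of_lt_of_le htb (Finset.inf'_le _ hh)⟩
    · rintro ⟨hhX, hht⟩
      by_contra hhS
      exact absurd (le_trans (Finset.le_sup' v (Finset.mem_sdiff.2 ⟨hhX, hhS⟩)) hta)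
        (not_le.2 hht)
  have hdisj : (↑P : Set (Finset α)).PairwiseDisjoint (fun S => Set.Ico (a S) (b S)) := by
    intro S hS T hT hST
    refine Set.disjoint_left.2 fun t htS htT => hST ?_
    rw [hchar S (Finset.mem_coe.1 hS) t htS, hchar T (Finset.mem_coe.1 hT) t htT]
  have hunion : (⋃ S ∈ P, Set.Ico (a S) (b S)) = Set.Ico (v g) (v f) := by
    ext t
    simp only [Set.mem_iUnion, Set.mem_Ico, exists_prop]
    constructor
    · rintro ⟨S, hS, ht⟩
      obtain ⟨hSX, hfS, hgS⟩ := hmem S hS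
      have h1 : S.Nonempty := ⟨f, hfS⟩
      have h2 : (X \ S).Nonempty := ⟨g, hgS⟩
      have hta : (X \ S).sup' h2 v ≤ t := by rw [← haval S h2]; exact ht.1
      have htb : t < S.inf' h1 v := by rw [← hbval S h1]; exact ht.2
      exact ⟨le_trans (Finset.le_sup' v hgS) hta, lt_of_lt_of_le htb (Finset.inf'_le v hfS)⟩
    · rintro ⟨htg, htf⟩
      have hgnot : g ∉ X.filter (fun h => t < v h) :=
        fun hgmem => absurd (Finset.mem_filter.1 hgmem).2 (not_lt.2 htg)
      have hfmem : f ∈ X.filter (fun h => t < v h) := Finset.mem_filter.2 ⟨hf, htf⟩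
      have h1 : (X.filter (fun h => t < v h)).Nonempty := ⟨f, hfmem⟩
      have h2 : (X \ X.filter (fun h => t < v h)).Nonempty :=
        ⟨g, Finset.mem_sdiff.2 ⟨hg, hgnot⟩⟩
      refine ⟨X.filter (fun h => t < v h), ?_, ?_, ?_⟩
      · simp only [hP, Finset.mem_filter, Finset.mem_powerset]
        exact ⟨Finset.filter_subset _ _, ⟨hf, htf⟩, fun hc => absurd hc.2 (not_lt.2 htg)⟩
      · rw [haval _ h2]
        refine Finset.sup'_le _ _ fun h hh => ?_
        have hh' := Finset.mem_sdiff.1 hh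
        by_contra hc
        exact hh'.2 (Finset.mem_filter.2 ⟨hh'.1, not_le.1 hc⟩)
      · rw [hbval _ h1]
        exact (Finset.lt_inf'_iff _).2 fun h hh => (Finset.mem_filter.1 hh).2
  calc ∑ S ∈ P, cutW X v S
      = ∑ S ∈ P, (volume (Set.Ico (a S) (b S))).toReal := Finset.sum_congr rfl hcut
    _ = (∑ S ∈ P, volume (Set.Ico (a S) (b S))).toReal :=
        (ENNReal.toReal_sum (fun S _ => by rw [Real.volume_Ico]; exact ENNReal.ofReal_ne_top)).symm
    _ = (volume (⋃ S ∈ P, Set.Ico (a S) (b S))).toReal := by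
        rw [measure_biUnion_finset hdisj (fun S _ => measurableSet_Ico)]
    _ = max (v f - v g) 0 := by
        rw [hunion, Real.volume_Ico, ENNReal.toReal_ofReal']

lemma cut_pointwise {α : Type*} [DecidableEq α] (X : Finset α) (v : α → ℝ)
    {f g : α} (hf : f ∈ X) (hg : g ∈ X) :
    ∑ S ∈ X.powerset, cutW X v S *
        |(if f ∈ S then (1:ℝ) else 0) - (if g ∈ S then (1:ℝ) else 0)| = |v f - v g| := by
  have hsplit : ∀ S : Finset α,
      cutW X v S * |(if f ∈ S then (1:ℝ) else 0) - (if g ∈ S then (1:ℝ) else 0)|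
      = (if f ∈ S ∧ g ∉ S then cutW X v S else 0)
        + (if g ∈ S ∧ f ∉ S then cutW X v S else 0) := by
    intro S
    by_cases h1 : f ∈ S <;> by_cases h2 : g ∈ S <;> simp [h1, h2]
  rw [Finset.sum_congr rfl fun S _ => hsplit S, Finset.sum_add_distrib,
    ← Finset.sum_filter, ← Finset.sum_filter, cut_sum_half X v hf hg, cut_sum_half X v hg hf]
  rcases le_total (v f) (v g) with h | h
  · rw [abs_of_nonpos (by linarith), max_eq_right (by linarith), max_eq_left (by linarith)]; ring
  · rw [abs_of_nonneg (by linarith), max_eq_left (by linarith), max_eq_right (by linarith)]; ring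

lemma aesm_inf' {Ω : Type*} [MeasurableSpace Ω] {μ : Measure Ω}
    (S : Finset (Lp ℝ 1 μ)) (h1 : S.Nonempty) :
    AEStronglyMeasurable (fun ω => S.inf' h1 (fun h => h ω)) μ := by
  induction h1 using Finset.Nonempty.cons_induction with
  | singleton a => simpa using Lp.aestronglyMeasurable a
  | cons a s h hs ih =>
      have key : (fun ω => (Finset.cons a s h).inf' (Finset.cons_nonempty h) (fun h => h ω))
          = fun ω => (a ω) ⊓ s.inf' hs (fun h => h ω) := by
        funext ω; exact Finset.inf'_cons hs _
      rw [key]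
      exact (Lp.aestronglyMeasurable a).inf ih

lemma aesm_sup' {Ω : Type*} [MeasurableSpace Ω] {μ : Measure Ω}
    (S : Finset (Lp ℝ 1 μ)) (h1 : S.Nonempty) :
    AEStronglyMeasurable (fun ω => S.sup' h1 (fun h => h ω)) μ := by
  induction h1 using Finset.Nonempty.cons_induction with
  | singleton a => simpa using Lp.aestronglyMeasurable a
  | cons a s h hs ih =>
      have key : (fun ω => (Finset.cons a s h).sup' (Finset.cons_nonempty h) (fun h => h ω))
          = fun ω => (a ω) ⊔ s.sup' hs (fun h => h ω) := by
        funext ω; exact Finset.sup'_cons hs _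
      rw [key]
      exact (Lp.aestronglyMeasurable a).sup ih

/-- Cut cone representation: for a finite subset X of L¹(Ω,μ) there are nonnegative
reals (β_S)_{S ⊆ X} with ‖f-g‖₁ = Σ_{S ⊆ X} β_S |𝟙_S(f) - 𝟙_S(g)| for all f,g ∈ X. -/
theorem stmt2 {Ω : Type*} [MeasurableSpace Ω] (μ : Measure Ω)
    (X : Finset (Lp ℝ 1 μ)) :
    ∃ β : Finset (Lp ℝ 1 μ) → ℝ, (∀ S, 0 ≤ β S) ∧
      ∀ f ∈ X, ∀ g ∈ X,
        ‖f - g‖ = ∑ S ∈ X.powerset,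
          β S * |(if f ∈ S then (1:ℝ) else 0) - (if g ∈ S then (1:ℝ) else 0)| := by
  set F : Finset (Lp ℝ 1 μ) → Ω → ℝ := fun S ω => cutW X (fun h => h ω) S with hF
  have hFnonneg : ∀ S ω, 0 ≤ F S ω := fun S ω => cutW_nonneg _ _ _
  have hFint : ∀ S, Integrable (F S) μ := by
    intro S
    by_cases h1 : S.Nonempty
    · by_cases h2 : (X \ S).Nonempty
      · obtain ⟨f₀, hf₀⟩ := id h1
        obtain ⟨g₀, hg₀⟩ := id h2
        have hFeq : F S = fun ω =>
            (S.inf' h1 (fun h => h ω) - (X \ S).sup' h2 (fun h => h ω)) ⊔ 0 := by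
          funext ω
          simp only [hF]
          rw [cutW_pos_eq (fun h => h ω) h1 h2]
        have hmeas : AEStronglyMeasurable (F S) μ := by
          rw [hFeq]
          exact ((aesm_inf' S h1).sub (aesm_sup' (X \ S) h2)).sup aestronglyMeasurable_const
        have hbound_int : Integrable (fun ω => |f₀ ω - g₀ ω|) μ :=
          ((L1.integrable_coeFn f₀).sub (L1.integrable_coeFn g₀)).abs
        refine hbound_int.mono' hmeas (Filter.Eventually.of_forall fun ω => ?_)
        rw [Real.norm_eq_abs, abs_of_nonneg (hFnonneg S ω)]
        simp only [hF]
        rw [cutW_pos_eq (fun h => h ω) h1 h2]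
        have hi : S.inf' h1 (fun h => h ω) ≤ f₀ ω :=
          Finset.inf'_le (fun h : Lp ℝ 1 μ => h ω) hf₀
        have hs : g₀ ω ≤ (X \ S).sup' h2 (fun h => h ω) :=
          Finset.le_sup' (fun h : Lp ℝ 1 μ => h ω) hg₀
        have hle : f₀ ω - g₀ ω ≤ |f₀ ω - g₀ ω| := le_abs_self _
        exact max_le (by linarith) (abs_nonneg _)
      · have hz : F S = fun _ => 0 := funext fun ω => cutW_zero₂ _ h2
        rw [hz]; exact integrable_zero _ _ _
    · have hz : F S = fun _ => 0 := funext fun ω => cutW_zero₁ _ h1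
      rw [hz]; exact integrable_zero _ _ _
  refine ⟨fun S => ∫ ω, F S ω ∂μ, fun S => integral_nonneg (hFnonneg S), ?_⟩
  intro f hf g hg
  have h1 : ‖f - g‖ = ∫ ω, |f ω - g ω| ∂μ := by
    rw [L1.norm_eq_integral_norm]
    refine integral_congr_ae ?_
    filter_upwards [Lp.coeFn_sub f g] with ω hω
    rw [hω]
    simp [Real.norm_eq_abs]
  have h2 : (fun ω => |f ω - g ω|) = fun ω => ∑ S ∈ X.powerset, F S ω *
      |(if f ∈ S then (1:ℝ) else 0) - (if g ∈ S then (1:ℝ) else 0)| := by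
    funext ω
    exact (cut_pointwise X (fun h => h ω) hf hg).symm
  rw [h1, h2, integral_finset_sum _ (fun S _ => (hFint S).mul_const _)]
  exact Finset.sum_congr rfl fun S _ => integral_mul_const _ _
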